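/- arXiv:1607.07559 — 5 statements merged into one kernel-verified Lean document; each statement's English description precedes it below -/
import Mathlib

section
/- Let ψ : G → K be a homomorphism of finite groups, let H₀ ≤ H₁ be subgroups of K, and let k̃ ∈ K. Let R ⊆ K be a complete set of representatives for those double cosets ψ(G)·k·H₀ that are contained in the double coset ψ(G)·k̃·H₁. Then the following identity of rational numbers holds: ∑_{k ∈ R} [G : ψ⁻¹(k·H₀·k⁻¹)] / [K : H₀] = [G : ψ⁻¹(k̃·H₁·k̃⁻¹)] / [K : H₁], where for a subgroup L ≤ K the preimage ψ⁻¹(L) is a subgroup of G and all indices are cast to ℚ. -/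
private lemma aux_card_doset {G K : Type*} [Group G] [Fintype G] [Group K] [Fintype K]
    (ψ : G →* K) (H : Subgroup K) (k : K) :
    Nat.card {x : K | ∃ g : G, ∃ h ∈ H, x = ψ g * k * h} *
      Nat.card (Subgroup.comap ψ (Subgroup.map (MulAut.conj k).toMonoidHom H))
      = Nat.card G * Nat.card H := by
  classical
  set L := Subgroup.comap ψ (Subgroup.map (MulAut.conj k).toMonoidHom H) with hL
  set Ds := {x : K | ∃ g : G, ∃ h ∈ H, x = ψ g * k * h} with hDs
  let f : G × H → Ds := fun p => ⟨ψ p.1 * k * p.2, ⟨p.1, p.2, p.2.2, rfl⟩⟩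
  have hfib : ∀ x : Ds, Nat.card {p : G × H // f p = x} = Nat.card L := by
    intro x
    obtain ⟨g₀, h₀, hh₀, hx⟩ := x.2
    have key : ∀ p : {p : G × H // f p = x}, ψ p.1.1 * k * (p.1.2 : K) = ψ g₀ * k * h₀ := by
      intro p
      have := congrArg Subtype.val p.2
      simpa [f, ← hx] using this
    let φ : {p : G × H // f p = x} → L := fun p =>
      ⟨g₀⁻¹ * p.1.1, by
        have hp := key p
        refine Subgroup.mem_comap.2 (Subgroup.mem_map.2 ⟨h₀ * (p.1.2 : K)⁻¹,
          mul_mem hh₀ (inv_mem p.1.2.2), ?_⟩)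
        have : ψ p.1.1 = ψ g₀ * k * h₀ * (p.1.2 : K)⁻¹ * k⁻¹ := by
          rw [eq_mul_inv_iff_mul_eq, eq_mul_inv_iff_mul_eq]; exact hp
        simp [MulAut.conj_apply, map_mul, map_inv, this]
        group⟩
    have hbij : Function.Bijective φ := by
      constructor
      · rintro ⟨⟨g, h⟩, hp⟩ ⟨⟨g', h'⟩, hp'⟩ hgg
        have h1 : g₀⁻¹ * g = g₀⁻¹ * g' := congrArg Subtype.val hgg
        have hg : g = g' := by exact mul_left_cancel h1
        have h2 : ψ g * k * (h : K) = ψ g' * k * (h' : K) :=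
          (key ⟨⟨g, h⟩, hp⟩).trans (key ⟨⟨g', h'⟩, hp'⟩).symm
        subst hg
        have hh : (h : K) = (h' : K) := by exact mul_left_cancel h2
        exact Subtype.ext (Prod.ext rfl (Subtype.ext hh))
      · rintro ⟨a, ha⟩
        obtain ⟨h', hh', hah⟩ := Subgroup.mem_map.1 (Subgroup.mem_comap.1 ha)
        have hψa : ψ a = k * h' * k⁻¹ := by simpa [MulAut.conj_apply] using hah.symm
        have hmem : (h')⁻¹ * h₀ ∈ H := mul_mem (inv_mem hh') hh₀
        refine ⟨⟨(g₀ * a, ⟨(h')⁻¹ * h₀, hmem⟩), ?_⟩, ?_⟩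
        · apply Subtype.ext
          show ψ (g₀ * a) * k * ((h')⁻¹ * h₀) = (x : K)
          rw [hx, map_mul, hψa]
          group
        · apply Subtype.ext
          show g₀⁻¹ * (g₀ * a) = a
          group
    exact Nat.card_congr (Equiv.ofBijective φ hbij)
  have h1 : Nat.card (G × H) = Nat.card (Σ x : Ds, {p : G × H // f p = x}) :=
    (Nat.card_congr (Equiv.sigmaFiberEquiv f)).symm
  have h2 : Nat.card (Σ x : Ds, {p : G × H // f p = x}) = Nat.card Ds * Nat.card L := by
    simp only [Nat.card_eq_fintype_card, Fintype.card_sigma]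
    calc ∑ x : Ds, Fintype.card {p : G × H // f p = x}
        = ∑ x : Ds, Nat.card L := by
          apply Finset.sum_congr rfl
          intro x _
          rw [← Nat.card_eq_fintype_card]
          exact hfib x
      _ = Fintype.card Ds * Fintype.card L := by
          simp [Nat.card_eq_fintype_card, Finset.sum_const, mul_comm]
  rw [← h2, ← h1, Nat.card_prod, mul_comm]

private lemma aux_ratio {G K : Type*} [Group G] [Fintype G] [Group K] [Fintype K]
    (ψ : G →* K) (H : Subgroup K) (k : K) :
    ((Subgroup.comap ψ (Subgroup.map (MulAut.conj k).toMonoidHom H)).index : ℚ) / (H.index : ℚ)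
      = (Nat.card {x : K | ∃ g : G, ∃ h ∈ H, x = ψ g * k * h} : ℚ) / (Nat.card K : ℚ) := by
  have hA := aux_card_doset ψ H k
  set L := Subgroup.comap ψ (Subgroup.map (MulAut.conj k).toMonoidHom H)
  set Ds := {x : K | ∃ g : G, ∃ h ∈ H, x = ψ g * k * h}
  have hL : L.index * Nat.card L = Nat.card G := L.index_mul_card
  have hH : H.index * Nat.card H = Nat.card K := H.index_mul_card
  have hLpos : (0 : ℚ) < Nat.card L := by exact_mod_cast Nat.card_pos
  have hKpos : (0 : ℚ) < Nat.card K := by exact_mod_cast Nat.card_pos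
  have hHipos : (0 : ℚ) < H.index := by
    exact_mod_cast Nat.pos_of_ne_zero H.index_ne_zero_of_finite
  have key : (L.index : ℚ) * Nat.card K * Nat.card L = (Nat.card Ds : ℚ) * H.index * Nat.card L := by
    have e1 : (L.index : ℚ) * Nat.card L = Nat.card G := by exact_mod_cast hL
    have e2 : (H.index : ℚ) * Nat.card H = Nat.card K := by exact_mod_cast hH
    have e3 : (Nat.card Ds : ℚ) * Nat.card L = Nat.card G * Nat.card H := by exact_mod_cast hA
    calc (L.index : ℚ) * Nat.card K * Nat.card L
        = (L.index : ℚ) * Nat.card L * Nat.card K := by ring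
      _ = (Nat.card G : ℚ) * ((H.index : ℚ) * Nat.card H) := by rw [e1, e2]
      _ = (Nat.card G : ℚ) * Nat.card H * H.index := by ring
      _ = (Nat.card Ds : ℚ) * Nat.card L * H.index := by rw [← e3]
      _ = (Nat.card Ds : ℚ) * H.index * Nat.card L := by ring
  have key2 : (L.index : ℚ) * Nat.card K = (Nat.card Ds : ℚ) * H.index :=
    mul_right_cancel₀ (ne_of_gt hLpos) key
  rw [div_eq_div_iff (ne_of_gt hHipos) (ne_of_gt hKpos)]
  linear_combination key2

private lemma aux_doset_eq {G K : Type*} [Group G] [Group K] (ψ : G →* K)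
    {H : Subgroup K} {k x : K} (hx : ∃ g : G, ∃ h ∈ H, x = ψ g * k * h) :
    {y : K | ∃ g : G, ∃ h ∈ H, y = ψ g * x * h} = {y : K | ∃ g : G, ∃ h ∈ H, y = ψ g * k * h} := by
  obtain ⟨g₀, h₀, hh₀, hx⟩ := hx
  ext y
  constructor
  · rintro ⟨a, b, hb, rfl⟩
    exact ⟨a * g₀, h₀ * b, mul_mem hh₀ hb, by rw [hx, map_mul]; group⟩
  · rintro ⟨a, b, hb, rfl⟩
    refine ⟨a * g₀⁻¹, h₀⁻¹ * b, mul_mem (inv_mem hh₀) hb, ?_⟩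
    rw [hx, map_mul, map_inv]; group

/-- Let `ψ : G → K` be a homomorphism of finite groups, `H₀ ≤ H₁`
subgroups of `K`, and `kt ∈ K`.  Let `R ⊆ K` be a complete set of representatives for
those double cosets `ψ(G)·k·H₀` that are contained in the double coset `ψ(G)·kt·H₁`.
Then `∑_{k ∈ R} [G : ψ⁻¹(kH₀k⁻¹)] / [K : H₀] = [G : ψ⁻¹(kt·H₁·kt⁻¹)] / [K : H₁]` in `ℚ`. -/
theorem doubleCoset_index_sum {G K : Type*} [Group G] [Fintype G] [Group K] [Fintype K]
    (ψ : G →* K) (H₀ H₁ : Subgroup K) (hH : H₀ ≤ H₁) (kt : K)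
    (D : K → Subgroup K → Set K)
    (hD : ∀ (k : K) (H : Subgroup K), D k H = {x : K | ∃ g : G, ∃ h ∈ H, x = ψ g * k * h})
    (R : Finset K)
    (hmem : ∀ k ∈ R, D k H₀ ⊆ D kt H₁)
    (hinj : ∀ k ∈ R, ∀ k' ∈ R, D k H₀ = D k' H₀ → k = k')
    (hsurj : ∀ k : K, D k H₀ ⊆ D kt H₁ → ∃ k' ∈ R, D k H₀ = D k' H₀) :
    ∑ k ∈ R,
        ((Subgroup.comap ψ (Subgroup.map (MulAut.conj k).toMonoidHom H₀)).index : ℚ)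
          / (H₀.index : ℚ)
      = ((Subgroup.comap ψ (Subgroup.map (MulAut.conj kt).toMonoidHom H₁)).index : ℚ)
          / (H₁.index : ℚ) := by
  classical
  have hsub : ∀ x ∈ D kt H₁, D x H₀ ⊆ D kt H₁ := by
    intro x hx
    rw [hD kt H₁] at hx
    obtain ⟨g, h, hh, rfl⟩ := hx
    rw [hD, hD]
    rintro y ⟨a, b, hb, rfl⟩
    exact ⟨a * g, h * b, mul_mem hh (hH hb), by rw [map_mul]; group⟩
  have hpart : (D kt H₁).toFinset = R.biUnion (fun k => (D k H₀).toFinset) := by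
    ext x
    simp only [Set.mem_toFinset, Finset.mem_biUnion]
    constructor
    · intro hx
      obtain ⟨k', hk', hDk⟩ := hsurj x (hsub x hx)
      refine ⟨k', hk', ?_⟩
      rw [← hDk, hD]
      exact ⟨1, 1, one_mem H₀, by simp⟩
    · rintro ⟨k', hk', hx⟩
      exact hmem k' hk' hx
  have hdisj : ∀ k ∈ R, ∀ k' ∈ R, k ≠ k' →
      Disjoint ((D k H₀).toFinset) ((D k' H₀).toFinset) := by
    intro k hk k' hk' hne
    rw [Finset.disjoint_left]
    intro x hx hx'
    rw [Set.mem_toFinset, hD] at hx hx'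
    exact hne (hinj k hk k' hk'
      (by rw [hD, hD, ← aux_doset_eq ψ hx, aux_doset_eq ψ hx']))
  have hcards : (D kt H₁).toFinset.card = ∑ k ∈ R, (D k H₀).toFinset.card := by
    rw [hpart]; exact Finset.card_biUnion hdisj
  have hcard_eq : ∀ (k : K) (H : Subgroup K),
      ((D k H).toFinset.card : ℚ) = Nat.card {x : K | ∃ g : G, ∃ h ∈ H, x = ψ g * k * h} := by
    intro k H
    rw [hD, Set.toFinset_card, Nat.card_eq_fintype_card]
    congr!
  calc ∑ k ∈ R,
        ((Subgroup.comap ψ (Subgroup.map (MulAut.conj k).toMonoidHom H₀)).index : ℚ)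
          / (H₀.index : ℚ)
      = ∑ k ∈ R, ((D k H₀).toFinset.card : ℚ) / (Nat.card K : ℚ) := by
        apply Finset.sum_congr rfl
        intro k _
        rw [aux_ratio ψ H₀ k, hcard_eq]
    _ = ((D kt H₁).toFinset.card : ℚ) / (Nat.card K : ℚ) := by
        rw [← Finset.sum_div, hcards]
        push_cast
        ring
    _ = ((Subgroup.comap ψ (Subgroup.map (MulAut.conj kt).toMonoidHom H₁)).index : ℚ)
          / (H₁.index : ℚ) := by
        rw [aux_ratio ψ H₁ kt, hcard_eq]
end

section
/- Let G be a finite group, H a proper subgroup of G, and g₀ ∈ G. Let x ∈ ℝ^G (with the standard Euclidean inner product) be a vector with ‖x‖ = 1 whose g-coordinate vanishes for every g ∉ g₀H (i.e., x is supported on the coset g₀H). Let e_G ∈ ℝ^G be the vector all of whose coordinates equal 1/√|G|. Then for every t ∈ ℝ one has ‖x + t·e_G‖² ≥ 1/2. -/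
/-- Let `G` be a finite group, `H` a proper subgroup, `g₀ ∈ G`.
If `x ∈ ℝ^G` is a unit vector supported on the coset `g₀H`, and `e_G ∈ ℝ^G` is the
vector all of whose coordinates are `1/√|G|`, then `‖x + t·e_G‖² ≥ 1/2` for all `t ∈ ℝ`. -/
theorem norm_sq_ge_half_of_supported_on_proper_coset {G : Type*} [Group G] [Fintype G]
    (H : Subgroup G) (hH : H ≠ ⊤) (g₀ : G)
    (x : EuclideanSpace ℝ G) (hx : ‖x‖ = 1)
    (hsupp : ∀ g : G, g₀⁻¹ * g ∉ H → x g = 0)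
    (eG : EuclideanSpace ℝ G) (heG : ∀ g : G, eG g = 1 / Real.sqrt (Fintype.card G)) :
    ∀ t : ℝ, 1 / 2 ≤ ‖x + t • eG‖ ^ 2 := by
  intro t
  classical
  set n : ℕ := Fintype.card G with hn
  have hnpos : 0 < (n : ℝ) := by exact_mod_cast Fintype.card_pos
  -- card of the coset
  set S : Finset G := Finset.univ.filter (fun g => g₀⁻¹ * g ∈ H) with hS
  have hScard : S.card = Nat.card H := by
    rw [Nat.card_eq_fintype_card, ← Fintype.card_coe]
    apply Fintype.card_congr
    refine ⟨fun g => ⟨g₀⁻¹ * g.1, (Finset.mem_filter.mp g.2).2⟩,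
           fun h => ⟨g₀ * h.1, by simp [hS]⟩, ?_, ?_⟩ <;> intro a <;> ext <;> simp
  -- index ≥ 2
  have hidx : 2 ≤ H.index := by
    have h1 : H.index ≠ 1 := fun h => hH (Subgroup.index_eq_one.mp h)
    have h0 : H.index ≠ 0 := Subgroup.index_ne_zero_of_finite
    omega
  have hcard2 : 2 * Nat.card H ≤ n := by
    have := H.index_mul_card
    rw [Nat.card_eq_fintype_card (α := G), ← hn] at this
    calc 2 * Nat.card H ≤ H.index * Nat.card H := by
          exact Nat.mul_le_mul_right _ hidx
      _ = n := this
  -- norms and inner products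
  have hnormsq : ∑ g : G, x g ^ 2 = 1 := by
    have := EuclideanSpace.norm_eq x
    rw [hx] at this
    have h2 : (1:ℝ) = Real.sqrt (∑ g : G, ‖x g‖ ^ 2) := this
    have h3 : ∑ g : G, ‖x g‖ ^ 2 = 1 := by
      nlinarith [Real.sq_sqrt (show (0:ℝ) ≤ ∑ g : G, ‖x g‖ ^ 2 by positivity)]
    simpa [Real.norm_eq_abs, sq_abs] using h3
  set s : ℝ := inner ℝ x eG with hs
  have hsval : s = (∑ g ∈ S, x g) / Real.sqrt n := by
    rw [hs, PiLp.inner_apply]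
    have : ∀ g : G, (inner ℝ (x g) (eG g) : ℝ) = x g * (1 / Real.sqrt n) := by
      intro g; simp [heG g, RCLike.inner_apply, mul_comm]
    rw [Finset.sum_congr rfl (fun g _ => this g)]
    rw [← Finset.sum_mul]
    have : ∑ g : G, x g = ∑ g ∈ S, x g := by
      symm
      apply Finset.sum_subset (Finset.subset_univ _)
      intro g _ hg
      exact hsupp g (by simpa [hS] using hg)
    rw [this]; ring
  have hsupsq : (∑ g ∈ S, x g) ^ 2 ≤ Nat.card H := by
    calc (∑ g ∈ S, x g) ^ 2 ≤ S.card * ∑ g ∈ S, x g ^ 2 := sq_sum_le_card_mul_sum_sq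
      _ ≤ S.card * ∑ g : G, x g ^ 2 := by
          apply mul_le_mul_of_nonneg_left _ (by positivity)
          exact Finset.sum_le_sum_of_subset_of_nonneg (Finset.subset_univ _)
            (fun _ _ _ => sq_nonneg _)
      _ = Nat.card H := by rw [hnormsq, hScard]; ring
  have hssq : s ^ 2 ≤ 1 / 2 := by
    rw [hsval, div_pow, Real.sq_sqrt hnpos.le]
    rw [div_le_div_iff₀ hnpos (by norm_num)]
    have : (2 : ℝ) * Nat.card H ≤ n := by exact_mod_cast hcard2
    nlinarith
  have heGnorm : ‖eG‖ ^ 2 = 1 := by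
    have := EuclideanSpace.norm_eq eG
    rw [this]
    rw [Real.sq_sqrt (by positivity)]
    have : ∀ g : G, ‖eG g‖ ^ 2 = 1 / n := by
      intro g
      rw [heG g, Real.norm_eq_abs, sq_abs, div_pow, Real.sq_sqrt hnpos.le]
      norm_num
    rw [Finset.sum_congr rfl (fun g _ => this g)]
    rw [Finset.sum_const, Finset.card_univ, ← hn]
    rw [nsmul_eq_mul]; field_simp
  have hexp : ‖x + t • eG‖ ^ 2 = 1 + 2 * (t * s) + t ^ 2 := by
    rw [norm_add_sq_real, hx, real_inner_smul_right, norm_smul]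
    rw [mul_pow, ← hs]
    simp [heGnorm, Real.norm_eq_abs, sq_abs]
  rw [hexp]
  nlinarith [sq_nonneg (t + s)]
end

section
/- Let l ≥ 1 and m ≥ 1 be natural numbers. Let S ⊆ ℝ^l × ℝ^l be the set of pairs of tuples (a, b) = ((a₁,…,a_l), (b₁,…,b_l)) such that: (1) 0 ≤ aᵢ < bᵢ ≤ 1 for all i; (2) the pairs are lexicographically ordered, i.e., aᵢ ≤ a_{i+1} for all i, and bᵢ ≤ b_{i+1} whenever aᵢ = a_{i+1}; and (3) every t ∈ (0,1) lies in the open interval (aᵢ, bᵢ) for at most m indices i. Then S is star-shaped with respect to the point c ∈ S with cᵢ = ((i−1)/l, i/l), i.e., for every (a,b) ∈ S and every s ∈ [0,1], the convex combination s·(a,b) + (1−s)·c lies in S. -/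
/-- Monotonicity from adjacent comparisons on `Fin l`. -/
lemma fin_mono_of_adj {l : ℕ} (f : Fin l → ℝ)
    (h : ∀ (i : Fin l) (hi : (i : ℕ) + 1 < l), f i ≤ f ⟨(i : ℕ) + 1, hi⟩) :
    ∀ i j : Fin l, i ≤ j → f i ≤ f j := by
  have key : ∀ n (hn : n < l) (i : Fin l), (i : ℕ) ≤ n → f i ≤ f ⟨n, hn⟩ := by
    intro n
    induction n with
    | zero =>
        intro hn i hi
        exact le_of_eq (congrArg f (Fin.ext (by simp only [Fin.val_mk]; omega)))
    | succ n ih =>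
      intro hn i hi
      rcases Nat.lt_or_ge (i : ℕ) (n + 1) with h' | h'
      · have h1 : n < l := by omega
        calc f i ≤ f ⟨n, h1⟩ := ih h1 i (by omega)
          _ ≤ f ⟨n + 1, hn⟩ := h ⟨n, h1⟩ (by simpa using hn)
      · exact le_of_eq (congrArg f (Fin.ext (by simp only [Fin.val_mk]; omega)))
  intro i j hij
  have := key (j : ℕ) j.2 i hij
  simpa using this

/-- The set `S` of lexicographically ordered `l`-tuples of pairs
`(aᵢ, bᵢ)` with `0 ≤ aᵢ < bᵢ ≤ 1` such that every `t ∈ (0,1)` lies in at most `m` of the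
open intervals `(aᵢ, bᵢ)` is star-shaped with respect to the point
`c = (((i−1)/l, i/l))ᵢ` (zero-indexed: `cᵢ = (i/l, (i+1)/l)`). -/
theorem intervalTuples_starShaped (l m : ℕ) (hl : 1 ≤ l) (hm : 1 ≤ m)
    (S : Set ((Fin l → ℝ) × (Fin l → ℝ)))
    (hS : ∀ p : (Fin l → ℝ) × (Fin l → ℝ), p ∈ S ↔
      ((∀ i, 0 ≤ p.1 i ∧ p.1 i < p.2 i ∧ p.2 i ≤ 1) ∧
       (∀ (i : Fin l) (h : (i : ℕ) + 1 < l),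
         p.1 i ≤ p.1 ⟨(i : ℕ) + 1, h⟩ ∧
           (p.1 i = p.1 ⟨(i : ℕ) + 1, h⟩ → p.2 i ≤ p.2 ⟨(i : ℕ) + 1, h⟩)) ∧
       (∀ t : ℝ, 0 < t → t < 1 →
         (Finset.univ.filter fun i => p.1 i < t ∧ t < p.2 i).card ≤ m)))
    (c : (Fin l → ℝ) × (Fin l → ℝ))
    (hc : c = (fun i : Fin l => ((i : ℕ) : ℝ) / (l : ℝ), fun i : Fin l => (((i : ℕ) : ℝ) + 1) / (l : ℝ))) :
    c ∈ S ∧ ∀ p ∈ S, ∀ s : ℝ, 0 ≤ s → s ≤ 1 →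
      (s • p.1 + (1 - s) • c.1, s • p.2 + (1 - s) • c.2) ∈ S := by
  subst hc
  have hl0 : (0 : ℝ) < l := by exact_mod_cast hl
  constructor
  · rw [hS]
    refine ⟨?_, ?_, ?_⟩
    · intro i
      have hi : ((i : ℕ) : ℝ) + 1 ≤ (l : ℝ) := by exact_mod_cast i.2
      refine ⟨by positivity, ?_, ?_⟩
      · exact (div_lt_div_iff_of_pos_right hl0).mpr (by linarith)
      · exact (div_le_one hl0).mpr hi
    · intro i h
      refine ⟨?_, fun _ => ?_⟩
      · exact (div_le_div_iff_of_pos_right hl0).mpr (by push_cast; linarith)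
      · exact (div_le_div_iff_of_pos_right hl0).mpr (by push_cast; linarith)
    · intro t ht0 ht1
      refine le_trans (Finset.card_le_one.mpr ?_) hm
      intro i hi j hj
      simp only [Finset.mem_filter, Finset.mem_univ, true_and] at hi hj
      have h1 : ((i : ℕ) : ℝ) / l < (((j : ℕ) : ℝ) + 1) / l := lt_trans hi.1 hj.2
      have h2 : ((j : ℕ) : ℝ) / l < (((i : ℕ) : ℝ) + 1) / l := lt_trans hj.1 hi.2
      have h1' : ((i : ℕ) : ℝ) < ((j : ℕ) : ℝ) + 1 := by
        have := (div_lt_div_iff_of_pos_right hl0).mp h1; linarith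
      have h2' : ((j : ℕ) : ℝ) < ((i : ℕ) : ℝ) + 1 := by
        have := (div_lt_div_iff_of_pos_right hl0).mp h2; linarith
      have a : (i : ℕ) < (j : ℕ) + 1 := by exact_mod_cast h1'
      have b : (j : ℕ) < (i : ℕ) + 1 := by exact_mod_cast h2'
      exact Fin.ext (by omega)
  · intro p hp s hs0 hs1
    rw [hS] at hp
    obtain ⟨h1, h2, h3⟩ := hp
    rw [hS]
    simp only [Pi.add_apply, Pi.smul_apply, smul_eq_mul]
    refine ⟨?_, ?_, ?_⟩
    · intro i
      obtain ⟨ha0, hab, hb1⟩ := h1 i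
      have hi : ((i : ℕ) : ℝ) + 1 ≤ (l : ℝ) := by exact_mod_cast i.2
      have hc0 : (0 : ℝ) ≤ ((i : ℕ) : ℝ) / l := by positivity
      have hcc : ((i : ℕ) : ℝ) / l < (((i : ℕ) : ℝ) + 1) / l :=
        (div_lt_div_iff_of_pos_right hl0).mpr (by linarith)
      have hc1 : (((i : ℕ) : ℝ) + 1) / l ≤ 1 := (div_le_one hl0).mpr hi
      refine ⟨?_, ?_, ?_⟩
      · have := mul_nonneg hs0 ha0
        have := mul_nonneg (by linarith : (0:ℝ) ≤ 1 - s) hc0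
        linarith
      · rcases lt_or_eq_of_le hs0 with hs | hs
        · have k1 := mul_lt_mul_of_pos_left hab hs
          have k2 := mul_le_mul_of_nonneg_left hcc.le (by linarith : (0:ℝ) ≤ 1 - s)
          linarith
        · have k2 := mul_lt_mul_of_pos_left hcc (by rw [← hs]; norm_num : (0:ℝ) < 1 - s)
          have k1 := mul_le_mul_of_nonneg_left hab.le hs0
          linarith
      · have k1 := mul_le_mul_of_nonneg_left hb1 hs0
        have k2 := mul_le_mul_of_nonneg_left hc1 (by linarith : (0:ℝ) ≤ 1 - s)
        linarith
    · intro i h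
      have haa := (h2 i h).1
      have hcoe : (((⟨(i : ℕ) + 1, h⟩ : Fin l) : ℕ) : ℝ) = ((i : ℕ) : ℝ) + 1 := by
        push_cast; ring
      have hcc : ((i : ℕ) : ℝ) / l < (((i : ℕ) : ℝ) + 1) / l :=
        (div_lt_div_iff_of_pos_right hl0).mpr (by linarith)
      constructor
      · have k1 := mul_le_mul_of_nonneg_left haa hs0
        have k2 := mul_le_mul_of_nonneg_left hcc.le (by linarith : (0:ℝ) ≤ 1 - s)
        rw [hcoe]; linarith
      · intro heq
        rw [hcoe] at heq
        have hs1' : s = 1 := by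
          by_contra hne
          have hslt : s < 1 := lt_of_le_of_ne hs1 hne
          have k2 := mul_lt_mul_of_pos_left hcc (by linarith : (0:ℝ) < 1 - s)
          have k1 := mul_le_mul_of_nonneg_left haa hs0
          linarith
        rw [hs1'] at heq ⊢
        have haeq : p.1 i = p.1 ⟨(i : ℕ) + 1, h⟩ := by linarith
        have hbb := (h2 i h).2 haeq
        rw [hcoe]
        linarith
    · intro t ht0 ht1
      rcases eq_or_lt_of_le hs0 with hs | hs
      · -- s = 0: at most one interval contains t
        refine le_trans (Finset.card_le_one.mpr ?_) hm
        intro i hi j hj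
        simp only [Finset.mem_filter, Finset.mem_univ, true_and] at hi hj
        rw [← hs] at hi hj
        have hi1 : ((i : ℕ) : ℝ) / l < t := by linarith [hi.1]
        have hi2 : t < (((i : ℕ) : ℝ) + 1) / l := by linarith [hi.2]
        have hj1 : ((j : ℕ) : ℝ) / l < t := by linarith [hj.1]
        have hj2 : t < (((j : ℕ) : ℝ) + 1) / l := by linarith [hj.2]
        have h1' : ((i : ℕ) : ℝ) < ((j : ℕ) : ℝ) + 1 := by
          have := (div_lt_div_iff_of_pos_right hl0).mp (lt_trans hi1 hj2); linarith
        have h2' : ((j : ℕ) : ℝ) < ((i : ℕ) : ℝ) + 1 := by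
          have := (div_lt_div_iff_of_pos_right hl0).mp (lt_trans hj1 hi2); linarith
        refine Fin.ext ?_
        have a : (i : ℕ) < (j : ℕ) + 1 := by exact_mod_cast h1'
        have b : (j : ℕ) < (i : ℕ) + 1 := by exact_mod_cast h2'
        omega
      · -- s > 0
        set F := (Finset.univ.filter fun i : Fin l =>
          s * p.1 i + (1 - s) * (((i : ℕ) : ℝ) / l) < t ∧
          t < s * p.2 i + (1 - s) * ((((i : ℕ) : ℝ) + 1) / l)) with hFdef
        show F.card ≤ m
        rcases F.eq_empty_or_nonempty with he | hne
        · rw [he]; simp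
        · have hmem : ∀ i : Fin l, i ∈ F ↔
              s * p.1 i + (1 - s) * (((i : ℕ) : ℝ) / l) < t ∧
              t < s * p.2 i + (1 - s) * ((((i : ℕ) : ℝ) + 1) / l) := by
            intro i; rw [hFdef]; simp
          have key : ∀ i ∈ F, ∀ j ∈ F, i ≤ j → p.1 j < p.2 i := by
            intro i hi j hj hij
            rcases eq_or_lt_of_le hij with h' | h'
            · rw [← h']; exact (h1 i).2.1
            · have hij' : ((i : ℕ) : ℝ) + 1 ≤ ((j : ℕ) : ℝ) := by
                exact_mod_cast Nat.succ_le_of_lt h'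
              have k1 := ((hmem j).mp hj).1
              have k2 := ((hmem i).mp hi).2
              have k3 : (1 - s) * ((((i : ℕ) : ℝ) + 1) / l) ≤
                  (1 - s) * (((j : ℕ) : ℝ) / l) :=
                mul_le_mul_of_nonneg_left ((div_le_div_iff_of_pos_right hl0).mpr hij')
                  (by linarith : (0:ℝ) ≤ 1 - s)
              have : s * p.1 j < s * p.2 i := by linarith
              exact lt_of_mul_lt_mul_left this hs0
          have mono : ∀ i j : Fin l, i ≤ j → p.1 i ≤ p.1 j :=
            fin_mono_of_adj p.1 (fun i hi => (h2 i hi).1)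
          set M := F.max' hne with hMdef
          have hMmem : M ∈ F := F.max'_mem hne
          have hMax : ∀ i ∈ F, i ≤ M := fun i hi => F.le_max' i hi
          obtain ⟨j0, hj0mem, hj0⟩ := Finset.exists_mem_eq_inf' hne p.2
          set B := F.inf' hne p.2 with hBdef
          have hMB : p.1 M < B := by
            rw [hj0]; exact key j0 hj0mem M hMmem (hMax j0 hj0mem)
          set t' := (p.1 M + B) / 2 with ht'def
          have ht'a : p.1 M < t' := by rw [ht'def]; linarith
          have ht'b : t' < B := by rw [ht'def]; linarith
          have hsub : F ⊆ Finset.univ.filter fun i => p.1 i < t' ∧ t' < p.2 i := by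
            intro i hi
            simp only [Finset.mem_filter, Finset.mem_univ, true_and]
            constructor
            · exact lt_of_le_of_lt (mono i M (hMax i hi)) ht'a
            · exact lt_of_lt_of_le ht'b (Finset.inf'_le p.2 hi)
          have ht'0 : 0 < t' := lt_of_le_of_lt (h1 M).1 ht'a
          have ht'1 : t' < 1 := by
            have : B ≤ 1 := by rw [hj0]; exact (h1 j0).2.2
            linarith
          exact le_trans (Finset.card_le_card hsub) (h3 t' ht'0 ht'1)
end

section
/- Let G be a finite group and k ≥ 0. Call a chain K₀ ≤ K₁ ≤ ⋯ ≤ K_k = Q of subgroups of a group Q 'simple' if the normal core of K₀ in Q (the largest normal subgroup of Q contained in K₀, equivalently the intersection of all Q-conjugates of K₀) is trivial. Then the assignment sending a pair (N, K₀ ≤ ⋯ ≤ K_k = G/N) — where N is a normal subgroup of G and K₀ ≤ ⋯ ≤ K_k = G/N is a simple chain of subgroups of G/N — to the chain π⁻¹(K₀) ≤ ⋯ ≤ π⁻¹(K_k) = G of subgroups of G (π : G → G/N the quotient map) is a bijection onto the set of all chains H₀ ≤ ⋯ ≤ H_k = G of subgroups of G ending in G. The inverse sends a chain H₀ ≤ ⋯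 ≤ H_k = G to the pair consisting of N = the normal core of H₀ in G and the chain of images of the Hᵢ in G/N. Moreover this bijection preserves the total index: [G/N : K₀] = [G : π⁻¹(K₀)]. -/
/-- A pair consisting of a normal subgroup `N` of `G` and a *simple* chain
`K₀ ≤ ⋯ ≤ K_k = ⊤` of subgroups of `G ⧸ N`, where "simple" means that the normal core
of `K₀` in `G ⧸ N` is trivial. -/
structure SimpleChainPair (G : Type*) [Group G] (k : ℕ) where
  N : Subgroup G
  [normal : N.Normal]
  chain : Fin (k + 1) → Subgroup (G ⧸ N)
  mono : Monotone chain
  top : chain (Fin.last k) = ⊤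
  simple : (chain 0).normalCore = ⊥

attribute [instance] SimpleChainPair.normal

lemma comap_normalCore_of_surjective {G Q : Type*} [Group G] [Group Q] (f : G →* Q)
    (hf : Function.Surjective f) (K : Subgroup Q) :
    (K.comap f).normalCore = K.normalCore.comap f := by
  apply le_antisymm
  · have h1 : ((K.comap f).normalCore.map f) ≤ K.normalCore := by
      have : ((K.comap f).normalCore.map f).Normal :=
        Subgroup.Normal.map (Subgroup.normalCore_normal _) f hf
      exact Subgroup.normal_le_normalCore.mpr
        (Subgroup.map_le_iff_le_comap.mpr (Subgroup.normalCore_le _))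
    exact le_trans (Subgroup.le_comap_map f _) (Subgroup.comap_mono h1)
  · have : (K.normalCore.comap f).Normal := Subgroup.Normal.comap (Subgroup.normalCore_normal _) f
    exact Subgroup.normal_le_normalCore.mpr (Subgroup.comap_mono (Subgroup.normalCore_le _))

/-- For a finite group `G`, the assignment sending a pair
`(N, K₀ ≤ ⋯ ≤ K_k = G/N)` — `N ⊴ G`, the chain simple — to the preimage chain
`π⁻¹(K₀) ≤ ⋯ ≤ π⁻¹(K_k) = G` is a bijection onto the set of all chains of subgroups of
`G` of length `k` ending in `G`; the inverse takes a chain to the normal core of its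
smallest member together with the chain of images, and the bijection preserves the
total index: `[G/N : K₀] = [G : π⁻¹(K₀)]`. -/
theorem simpleChainPair_bijection {G : Type*} [Group G] [Finite G] (k : ℕ)
    (F : SimpleChainPair G k → (Fin (k + 1) → Subgroup G))
    (hF : ∀ (p : SimpleChainPair G k) (i : Fin (k + 1)),
      F p i = (p.chain i).comap (QuotientGroup.mk' p.N)) :
    Function.Injective F
    ∧ (∀ p : SimpleChainPair G k, Monotone (F p) ∧ F p (Fin.last k) = ⊤)
    ∧ (∀ C : Fin (k + 1) → Subgroup G, Monotone C → C (Fin.last k) = ⊤ → ∃ p, F p = C)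
    ∧ (∀ p : SimpleChainPair G k, p.N = (F p 0).normalCore)
    ∧ (∀ p : SimpleChainPair G k, (p.chain 0).index = (F p 0).index) := by
  have hsurj : ∀ (N : Subgroup G) [N.Normal], Function.Surjective (QuotientGroup.mk' N) :=
    fun N _ => QuotientGroup.mk'_surjective N
  -- N = normalCore of F p 0
  have hcore : ∀ p : SimpleChainPair G k, p.N = (F p 0).normalCore := by
    intro p
    rw [hF, comap_normalCore_of_surjective _ (hsurj p.N), p.simple]
    simp [QuotientGroup.ker_mk']
  refine ⟨?_, ?_, ?_, hcore, ?_⟩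
  · intro p q hpq
    have hN : p.N = q.N := by
      rw [hcore p, hcore q, hpq]
    obtain ⟨N, c, mono, top, simple⟩ := p
    obtain ⟨N', c', mono', top', simple'⟩ := q
    dsimp at hN
    subst hN
    have hc : c = c' := by
      funext i
      have := congrFun hpq i
      rw [hF, hF] at this
      exact Subgroup.comap_injective (hsurj N) this
    subst hc
    rfl
  · intro p
    constructor
    · intro i j hij
      rw [hF, hF]
      exact Subgroup.comap_mono (p.mono hij)
    · rw [hF, p.top, Subgroup.comap_top]
  · intro C hmono htop
    have hnorm : (C 0).normalCore.Normal := Subgroup.normalCore_normal _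
    have hle : ∀ i, (C 0).normalCore ≤ C i := fun i =>
      le_trans (Subgroup.normalCore_le _) (hmono (Fin.zero_le i))
    refine ⟨@SimpleChainPair.mk G _ k (C 0).normalCore hnorm
      (fun i => (C i).map (QuotientGroup.mk' (C 0).normalCore)) ?_ ?_ ?_, ?_⟩
    · intro i j hij
      exact Subgroup.map_mono (hmono hij)
    · rw [htop]
      exact Subgroup.map_top_of_surjective _ (hsurj _)
    · have hcm : ∀ i, ((C i).map (QuotientGroup.mk' (C 0).normalCore)).comap
          (QuotientGroup.mk' (C 0).normalCore) = C i := by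
        intro i
        rw [Subgroup.comap_map_eq, QuotientGroup.ker_mk', sup_eq_left.mpr (hle i)]
      apply Subgroup.comap_injective (hsurj (C 0).normalCore)
      rw [← comap_normalCore_of_surjective _ (hsurj _), hcm 0, MonoidHom.comap_bot,
        QuotientGroup.ker_mk']
    · funext i
      rw [hF]
      dsimp
      rw [Subgroup.comap_map_eq, QuotientGroup.ker_mk', sup_eq_left.mpr (hle i)]
  · intro p
    rw [hF]
    exact (Subgroup.index_comap_of_surjective _ (hsurj p.N)).symm
end

section
/- Let G be a finite group which is not cyclic of prime power order (i.e., G is not isomorphic to ℤ/p^k for any prime p and k ≥ 0). Then G possesses two maximal subgroups H and H' that are not conjugate in G, i.e., there is no g ∈ G with g·H·g⁻¹ = H'. -/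
open Subgroup

/-- An element of the normalizer conjugates `H` to itself. -/
lemma map_conj_eq_of_mem_normalizer {G : Type*} [Group G] {H : Subgroup G} {a : G}
    (ha : a ∈ normalizer (H : Set G)) : H.map (MulAut.conj a).toMonoidHom = H := by
  ext x
  simp only [Subgroup.mem_map, MulEquiv.coe_toMonoidHom, MulAut.conj_apply]
  constructor
  · rintro ⟨h, hh, rfl⟩
    exact (Subgroup.mem_normalizer_iff.mp ha h).mp hh
  · intro hx
    refine ⟨a⁻¹ * x * a, ?_, by group⟩
    have := (Subgroup.mem_normalizer_iff.mp ((normalizer (H : Set G)).inv_mem ha) x).mp hx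
    simpa [mul_assoc] using this

lemma map_conj_eq_of_rel {G : Type*} [Group G] {H : Subgroup G} {a b : G}
    (hab : a⁻¹ * b ∈ normalizer (H : Set G)) :
    H.map (MulAut.conj a).toMonoidHom = H.map (MulAut.conj b).toMonoidHom := by
  have h1 : H.map (MulAut.conj (a⁻¹ * b)).toMonoidHom = H := map_conj_eq_of_mem_normalizer hab
  calc H.map (MulAut.conj a).toMonoidHom
      = (H.map (MulAut.conj (a⁻¹ * b)).toMonoidHom).map (MulAut.conj a).toMonoidHom := by
        rw [h1]
    _ = H.map (MulAut.conj b).toMonoidHom := by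
        rw [Subgroup.map_map]
        congr 1
        ext x
        simp [MulAut.conj_apply, mul_assoc]

/-- A finite group is never the union of the conjugates of a proper subgroup. -/
lemma exists_forall_not_mem_conj {G : Type*} [Group G] [Finite G] {H : Subgroup G}
    (hH : H ≠ ⊤) : ∃ x : G, ∀ g : G, x ∉ H.map (MulAut.conj g).toMonoidHom := by
  classical
  cases nonempty_fintype G
  by_contra hc
  push_neg at hc
  set n := Nat.card G with hn
  set h := Nat.card H with hh
  set i := H.index with hi
  have hih : i * h = n := H.index_mul_card
  have hipos : i ≠ 0 := Subgroup.index_ne_zero_of_finite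
  have hione : i ≠ 1 := fun h1 => hH (Subgroup.index_eq_one.mp h1)
  have hhpos : 0 < h := Nat.card_pos
  -- the finset of conjugates
  set C : Finset (Subgroup G) :=
    Finset.univ.image (fun g : G => H.map (MulAut.conj g).toMonoidHom) with hC
  -- card C ≤ i
  have hCcard : C.card ≤ i := by
    set N := normalizer (H : Set G) with hN
    have hfac : ∀ g : G, H.map (MulAut.conj g).toMonoidHom
        = H.map (MulAut.conj ((QuotientGroup.mk g : G ⧸ N)).out).toMonoidHom := by
      intro g
      apply map_conj_eq_of_rel
      exact QuotientGroup.eq.mp (QuotientGroup.out_eq' _).symm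
    have hsub : C ⊆ Finset.univ.image
        (fun q : G ⧸ N => H.map (MulAut.conj q.out).toMonoidHom) := by
      intro K hK
      simp only [hC, Finset.mem_image, Finset.mem_univ, true_and] at hK ⊢
      obtain ⟨g, rfl⟩ := hK
      exact ⟨QuotientGroup.mk g, (hfac g).symm⟩
    calc C.card ≤ _ := Finset.card_le_card hsub
      _ ≤ Fintype.card (G ⧸ N) := Finset.card_image_le.trans (by simp)
      _ = N.index := by rw [← Nat.card_eq_fintype_card]; rfl
      _ ≤ i := Nat.le_of_dvd (Nat.pos_of_ne_zero hipos)
          (Subgroup.index_dvd_of_le H.le_normalizer)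
  -- every conjugate has cardinality h
  have hcardconj : ∀ K ∈ C, Nat.card K = h := by
    intro K hK
    simp only [hC, Finset.mem_image, Finset.mem_univ, true_and] at hK
    obtain ⟨g, rfl⟩ := hK
    exact (Nat.card_congr
      (H.equivMapOfInjective _ (MulAut.conj g).injective).toEquiv.symm)
  -- the covering
  have hcover : (Finset.univ : Finset G) ⊆
      insert 1 (C.biUnion (fun K => (K : Set G).toFinset.erase 1)) := by
    intro x _
    by_cases hx1 : x = 1
    · simp [hx1]
    · obtain ⟨g, hg⟩ := hc x
      refine Finset.mem_insert_of_mem (Finset.mem_biUnion.mpr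
        ⟨H.map (MulAut.conj g).toMonoidHom, ?_, ?_⟩)
      · simp only [hC, Finset.mem_image, Finset.mem_univ, true_and]
        exact ⟨g, rfl⟩
      · simp only [Finset.mem_erase, Set.mem_toFinset, SetLike.mem_coe]
        exact ⟨hx1, hg⟩
  have hcount : n ≤ 1 + C.card * (h - 1) := by
    calc n = (Finset.univ : Finset G).card := by
            rw [hn, Nat.card_eq_fintype_card, Finset.card_univ]
      _ ≤ (insert 1 (C.biUnion (fun K => (K : Set G).toFinset.erase 1))).card :=
            Finset.card_le_card hcover
      _ ≤ 1 + (C.biUnion (fun K => (K : Set G).toFinset.erase 1)).card :=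
            le_trans (Finset.card_insert_le _ _) (by omega)
      _ ≤ 1 + ∑ K ∈ C, ((K : Set G).toFinset.erase 1).card := by
            gcongr; exact Finset.card_biUnion_le
      _ ≤ 1 + ∑ K ∈ C, (h - 1) := by
            gcongr 1 + ?_
            apply Finset.sum_le_sum
            intro K hK
            have : ((K : Set G).toFinset).card = h := by
              rw [← hcardconj K hK, Nat.card_eq_fintype_card, Set.toFinset_card]
              rfl
            rw [Finset.card_erase_of_mem (by simp [Subgroup.one_mem]), this]
      _ = 1 + C.card * (h - 1) := by rw [Finset.sum_const, smul_eq_mul]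
  have hkey : i * (h - 1) + i = n := by
    have : i * (h - 1) + i * 1 = i * h := by
      rw [← Nat.mul_add, Nat.sub_add_cancel hhpos]
    simpa [hih] using this
  have hCb : C.card * (h - 1) ≤ i * (h - 1) := Nat.mul_le_mul_right _ hCcard
  omega

/-- A subgroup of prime index is maximal. -/
lemma isCoatom_of_index_prime' {G : Type*} [Group G] {H : Subgroup G} {p : ℕ}
    (hp : p.Prime) (h : H.index = p) : IsCoatom H := by
  constructor
  · intro htop
    rw [htop, Subgroup.index_top] at h
    exact hp.one_lt.ne' h.symm
  · intro K hK
    have h1 : H.relIndex K * K.index = H.index := Subgroup.relIndex_mul_index hK.1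
    rw [h] at h1
    have hdvd : K.index ∣ p := Dvd.intro_left _ h1
    rcases (Nat.Prime.eq_one_or_self_of_dvd hp _ hdvd) with h2 | h2
    · exact Subgroup.index_eq_one.mp h2
    · exfalso
      rw [h2] at h1
      have hrel : H.relIndex K = 1 := by
        have hp0 : p ≠ 0 := hp.ne_zero
        have := Nat.eq_of_mul_eq_mul_right (Nat.pos_of_ne_zero hp0) (h1.trans (one_mul p).symm)
        exact this
      exact hK.2 (Subgroup.relIndex_eq_one.mp hrel)

/-- In a cyclic group of order `n`, for a prime `p ∣ n`, the subgroup generated by `g ^ p`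
(`g` a generator) has index `p`. -/
lemma index_zpowers_pow_prime {G : Type*} [Group G] [Finite G] {g : G}
    (hg : ∀ x, x ∈ Subgroup.zpowers g) {p : ℕ} (hp : p.Prime) (hpn : p ∣ Nat.card G) :
    (Subgroup.zpowers (g ^ p)).index = p := by
  have hn0 : Nat.card G ≠ 0 := Nat.card_pos.ne'
  have horder : orderOf g = Nat.card G := orderOf_eq_card_of_forall_mem_zpowers hg
  have hcard : Nat.card (Subgroup.zpowers (g ^ p)) = Nat.card G / p := by
    rw [Nat.card_zpowers, orderOf_pow, horder, Nat.gcd_eq_right hpn]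
  have hmul : (Subgroup.zpowers (g ^ p)).index * (Nat.card G / p) = Nat.card G := by
    rw [← hcard]; exact Subgroup.index_mul_card _
  have hq0 : Nat.card G / p ≠ 0 := by
    intro h0
    rw [Nat.div_eq_zero_iff, or_iff_right hp.ne_zero] at h0
    exact absurd (Nat.le_of_dvd (Nat.pos_of_ne_zero hn0) hpn) (by omega)
  have : p * (Nat.card G / p) = Nat.card G := Nat.mul_div_cancel' hpn
  exact Nat.eq_of_mul_eq_mul_right (Nat.pos_of_ne_zero hq0) (hmul.trans this.symm)

/-- A finite group that is not cyclic of prime power order has two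
maximal subgroups that are not conjugate. -/
theorem exists_nonconjugate_maximal_subgroups {G : Type*} [Group G] [Finite G]
    (hG : ¬ (IsCyclic G ∧ ∃ p k : ℕ, p.Prime ∧ Nat.card G = p ^ k)) :
    ∃ H H' : Subgroup G, IsCoatom H ∧ IsCoatom H' ∧
      ∀ g : G, Subgroup.map (MulAut.conj g).toMonoidHom H ≠ H' := by
  classical
  by_cases hcyc : IsCyclic G
  · -- cyclic case: the order has two distinct prime factors
    obtain ⟨g, hg⟩ := hcyc.exists_generator
    set n := Nat.card G with hn
    have hn0 : n ≠ 0 := Nat.card_pos.ne'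
    have hpow : ¬ ∃ p k : ℕ, p.Prime ∧ n = p ^ k := fun h => hG ⟨hcyc, h⟩
    have hn1 : n ≠ 1 := fun h => hpow ⟨2, 0, Nat.prime_two, by simp [h]⟩
    -- there exist two distinct primes dividing n
    obtain ⟨p, q, hp, hq, hpq, hpn, hqn⟩ :
        ∃ p q : ℕ, p.Prime ∧ q.Prime ∧ p ≠ q ∧ p ∣ n ∧ q ∣ n := by
      by_contra hcon
      push_neg at hcon
      set p := n.minFac with hpdef
      have hp : p.Prime := Nat.minFac_prime hn1
      have hpn : p ∣ n := Nat.minFac_dvd n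
      have huniq : ∀ r : ℕ, r.Prime → r ∣ n → r = p := by
        intro r hr hrn
        by_contra hne
        exact (hcon p r hp hr (Ne.symm hne) hpn) hrn
      have hk := Nat.eq_prime_pow_of_unique_prime_dvd hn0 (fun {d} hd hdn => huniq d hd hdn)
      exact hpow ⟨p, _, hp, hk⟩
    -- the two maximal subgroups
    have hip : (Subgroup.zpowers (g ^ p)).index = p := index_zpowers_pow_prime hg hp hpn
    have hiq : (Subgroup.zpowers (g ^ q)).index = q := index_zpowers_pow_prime hg hq hqn
    refine ⟨Subgroup.zpowers (g ^ p), Subgroup.zpowers (g ^ q),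
      isCoatom_of_index_prime' hp hip, isCoatom_of_index_prime' hq hiq, ?_⟩
    -- conjugation is trivial in a cyclic (hence commutative) group
    have hcomm : ∀ a b : G, a * b = b * a := by
      intro a b
      obtain ⟨i, hi⟩ := hg a
      obtain ⟨j, hj⟩ := hg b
      rw [← hi, ← hj, ← zpow_add, ← zpow_add, add_comm]
    have hmap : ∀ (x : G) (K : Subgroup G), K.map (MulAut.conj x).toMonoidHom = K := by
      intro x K
      ext y
      simp only [Subgroup.mem_map, MulEquiv.coe_toMonoidHom, MulAut.conj_apply]
      constructor
      · rintro ⟨h, hh, rfl⟩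
        rwa [hcomm x h, mul_assoc, mul_inv_cancel, mul_one]
      · intro hy
        exact ⟨y, hy, by rw [hcomm x y, mul_assoc, mul_inv_cancel, mul_one]⟩
    intro x hx
    rw [hmap] at hx
    apply hpq
    rw [← hip, ← hiq, hx]
  · -- non-cyclic case
    have hnt : Nontrivial G := by
      by_contra hns
      have : Subsingleton G := not_nontrivial_iff_subsingleton.mp hns
      exact hcyc inferInstance
    by_contra hcon
    push_neg at hcon
    -- there is a maximal subgroup
    obtain ⟨M, hM, -⟩ := (eq_top_or_exists_le_coatom
      (⊥ : Subgroup G)).resolve_left bot_ne_top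
    -- every element lies in a conjugate of M
    obtain ⟨x, hxall⟩ := exists_forall_not_mem_conj hM.1
    have hxtop : Subgroup.zpowers x ≠ ⊤ := by
      intro h
      refine hcyc ⟨⟨x, fun y => ?_⟩⟩
      have hy : y ∈ (⊤ : Subgroup G) := Subgroup.mem_top y
      rwa [← h] at hy
    obtain ⟨K, hK, hxK⟩ := (eq_top_or_exists_le_coatom
      (Subgroup.zpowers x)).resolve_left hxtop
    obtain ⟨g, hg⟩ := hcon M K hM hK
    exact hxall g (hg ▸ hxK (Subgroup.mem_zpowers x))
end
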